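/- For any prime p ≥ 5, H_{⌊p/3⌋} ≡ -(3/2)*q_p(3) (mod p), where H_n is the n-th harmonic number and q_p(3) = (3^{p-1}-1)/p is the Fermat quotient of 3. -/

import Mathlib

open Finset

private lemma binom_aux (x y : ℤ) (n : ℕ) :
    ∃ c : ℤ, (x + y) ^ (n + 1) = x ^ (n + 1) + ((n : ℤ) + 1) * x ^ n * y + y ^ 2 * c := by
  induction n with
  | zero => exact ⟨0, by ring⟩
  | succ n ih =>
    obtain ⟨c, hc⟩ := ih
    refine ⟨x * c + ((n : ℤ) + 1) * x ^ n + y * c, ?_⟩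
    have h : (x + y) ^ (n + 1 + 1) = (x + y) * (x + y) ^ (n + 1) := by ring
    rw [h, hc]
    push_cast
    ring

private def fq (p n : ℕ) : ℤ := ((n : ℤ) ^ (p - 1) - 1) / p

private lemma fq_spec (p n : ℕ) (hp : p.Prime) (hn : ¬ p ∣ n) :
    ((n : ℤ)) ^ (p - 1) - 1 = p * fq p n := by
  have hFact : Fact p.Prime := ⟨hp⟩
  have h0 : ((n : ZMod p)) ≠ 0 := by
    simpa [ZMod.natCast_eq_zero_iff] using hn
  have hdvd : (p : ℤ) ∣ (n : ℤ) ^ (p - 1) - 1 := by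
    have h : (((n : ℤ) ^ (p - 1) - 1 : ℤ) : ZMod p) = 0 := by
      push_cast
      rw [ZMod.pow_card_sub_one_eq_one h0]
      ring
    exact (ZMod.intCast_zmod_eq_zero_iff_dvd _ p).mp h
  exact (Int.mul_ediv_cancel' hdvd).symm

private lemma fq_mul (p a b : ℕ) (hp : p.Prime) (ha : ¬ p ∣ a) (hb : ¬ p ∣ b) :
    (fq p (a * b) : ZMod p) = (fq p a : ZMod p) + fq p b := by
  have hab : ¬ p ∣ a * b := fun h => ((hp.dvd_mul.mp h).elim ha hb)
  have e1 := fq_spec p a hp ha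
  have e2 := fq_spec p b hp hb
  have e3 := fq_spec p (a * b) hp hab
  have hpz : (p : ℤ) ≠ 0 := by exact_mod_cast hp.ne_zero
  have key : fq p (a * b) = fq p a + fq p b + p * (fq p a * fq p b) := by
    apply mul_left_cancel₀ hpz
    have h4 : ((a * b : ℕ) : ℤ) ^ (p - 1) = ((a : ℤ) ^ (p - 1)) * ((b : ℤ) ^ (p - 1)) := by
      push_cast; ring
    rw [h4] at e3
    rw [← e3]
    linear_combination ((b : ℤ) ^ (p - 1)) * e1 + (1 + (p : ℤ) * fq p a) * e2
  rw [key]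
  push_cast [ZMod.natCast_self]
  ring

private lemma fq_local (p n : ℕ) (hp : p.Prime) (hp5 : 5 ≤ p) (hn : ¬ p ∣ n) :
    (fq p n : ZMod p) = (fq p (n % p) : ZMod p) - (n / p : ℕ) * ((n : ZMod p))⁻¹ := by
  have hFact : Fact p.Prime := ⟨hp⟩
  have hpz : (p : ℤ) ≠ 0 := by exact_mod_cast hp.ne_zero
  have hr : ¬ p ∣ n % p := by
    intro h
    exact hn ((Nat.dvd_mod_iff dvd_rfl).mp h)
  obtain ⟨c, hc⟩ := binom_aux ((n % p : ℕ) : ℤ) ((p : ℤ) * ((n / p : ℕ) : ℤ)) (p - 2)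
  have hexp : p - 2 + 1 = p - 1 := by omega
  have hn' : ((n % p : ℕ) : ℤ) + (p : ℤ) * ((n / p : ℕ) : ℤ) = (n : ℤ) := by
    exact_mod_cast Nat.mod_add_div n p
  rw [hexp, hn'] at hc
  have e3 := fq_spec p n hp hn
  have er := fq_spec p (n % p) hp hr
  have key : fq p n = fq p (n % p)
      + (((p - 2 : ℕ) : ℤ) + 1) * ((n % p : ℕ) : ℤ) ^ (p - 2) * ((n / p : ℕ) : ℤ)
      + p * (((n / p : ℕ) : ℤ) ^ 2 * c) := by
    apply mul_left_cancel₀ hpz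
    linear_combination -e3 + hc + er
  have hcast := congrArg (fun z : ℤ => (z : ZMod p)) key
  simp only [Int.cast_add, Int.cast_mul, Int.cast_pow, Int.cast_natCast, Int.cast_one] at hcast
  have hp0 : ((p : ℕ) : ZMod p) = 0 := ZMod.natCast_self p
  have hc2 : (((p - 2 : ℕ) : ZMod p) + 1) = -1 := by
    have h := congrArg (fun k : ℕ => (k : ZMod p)) (show (p - 2) + 2 = p by omega)
    push_cast at h
    rw [hp0] at h
    linear_combination h
  have hmod : ((n % p : ℕ) : ZMod p) = (n : ZMod p) := by
    rw [ZMod.natCast_mod]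
  have hn0 : (n : ZMod p) ≠ 0 := by
    simpa [ZMod.natCast_eq_zero_iff] using hn
  have hinv : ((n : ZMod p)) ^ (p - 2) = ((n : ZMod p))⁻¹ := by
    have h1 : (n : ZMod p) ^ (p - 1) = 1 := ZMod.pow_card_sub_one_eq_one hn0
    have h2 : (n : ZMod p) ^ (p - 2) * (n : ZMod p) = 1 := by
      rw [← pow_succ, hexp, h1]
    field_simp
    linear_combination h2
  rw [hcast, hmod, hc2, hinv, hp0]
  ring

-- reindex: sums over Icc 1 (p-1) = sums over nonzero elements of ZMod p
private lemma reindex3 (p : ℕ) [NeZero p] (hp : p.Prime) (g : ZMod p → ZMod p) :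
    ∑ k ∈ Icc 1 (p - 1), g (k : ZMod p) = ∑ x ∈ (univ : Finset (ZMod p)).erase 0, g x := by
  have hFact : Fact p.Prime := ⟨hp⟩
  haveI : NeZero p := ⟨hp.ne_zero⟩
  refine Finset.sum_nbij' (fun k => ((k : ZMod p))) (fun x => x.val) ?_ ?_ ?_ ?_ ?_
  · intro k hk
    simp only [mem_Icc] at hk
    have h2 := hp.two_le
    have hk0 : (k : ZMod p) ≠ 0 := by
      rw [Ne, ZMod.natCast_eq_zero_iff]
      intro h
      have := Nat.le_of_dvd (by omega) h
      omega
    simp [hk0]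
  · intro x hx
    simp only [mem_erase, mem_univ, and_true] at hx
    have h1 : x.val ≠ 0 := fun h => hx (by rwa [← ZMod.val_eq_zero])
    have h2 : x.val < p := ZMod.val_lt x
    simp only [mem_Icc]
    omega
  · intro k hk
    simp only [mem_Icc] at hk
    have h2 := hp.two_le
    show ((k : ZMod p)).val = k
    rw [ZMod.val_natCast, Nat.mod_eq_of_lt (by omega)]
  · intro x hx
    exact ZMod.natCast_rightInverse x
  · intro k hk
    rfl

private lemma mul_perm3 (p : ℕ) [NeZero p] (hp : p.Prime) (g : ZMod p → ZMod p) (a : ZMod p) (ha : a ≠ 0) :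
    ∑ x ∈ (univ : Finset (ZMod p)).erase 0, g (a * x)
      = ∑ x ∈ (univ : Finset (ZMod p)).erase 0, g x := by
  have hFact : Fact p.Prime := ⟨hp⟩
  apply Finset.sum_equiv (Equiv.mulLeft₀ a ha)
  · intro i
    simp [Equiv.mulLeft₀, mul_eq_zero, ha]
  · intro i hi
    rfl

private lemma inv_perm3 (p : ℕ) [NeZero p] (hp : p.Prime) (g : ZMod p → ZMod p) :
    ∑ x ∈ (univ : Finset (ZMod p)).erase 0, g x⁻¹
      = ∑ x ∈ (univ : Finset (ZMod p)).erase 0, g x := by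
  have hFact : Fact p.Prime := ⟨hp⟩
  apply Finset.sum_equiv (Function.Involutive.toPerm _ (inv_involutive : Function.Involutive (fun x : ZMod p => x⁻¹)))
  · intro i
    simp [inv_eq_zero]
  · intro i hi
    rfl

private lemma sum_univ_zmod (p : ℕ) [NeZero p] (hp : p.Prime) (hp5 : 5 ≤ p) :
    ∑ x ∈ (univ : Finset (ZMod p)), x = 0 := by
  have hFact : Fact p.Prime := ⟨hp⟩
  have h : ∑ x ∈ (univ : Finset (ZMod p)), x = ∑ x ∈ (univ : Finset (ZMod p)), (-x) := by
    apply Finset.sum_equiv (Equiv.neg (ZMod p)) (by simp) (by simp)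
  have h2 : (2 : ZMod p) * ∑ x ∈ (univ : Finset (ZMod p)), x = 0 := by
    rw [two_mul]
    nth_rewrite 2 [h]
    rw [← Finset.sum_add_distrib]
    simp
  have h20 : (2 : ZMod p) ≠ 0 := by
    have : ((2 : ℕ) : ZMod p) ≠ 0 := by
      rw [Ne, ZMod.natCast_eq_zero_iff]
      intro hd
      have := Nat.le_of_dvd (by omega) hd
      omega
    simpa using this
  exact (mul_eq_zero.mp h2).resolve_left h20

-- sum of inverses over 1..p-1 is 0
private lemma sum_inv_all3 (p : ℕ) [NeZero p] (hp : p.Prime) (hp5 : 5 ≤ p) :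
    ∑ k ∈ Icc 1 (p - 1), ((k : ZMod p))⁻¹ = 0 := by
  have hFact : Fact p.Prime := ⟨hp⟩
  rw [reindex3 p hp (fun x => x⁻¹), inv_perm3 p hp (fun x => x)]
  rw [Finset.sum_erase (univ : Finset (ZMod p)) (f := fun x : ZMod p => x) (a := 0) rfl]
  exact sum_univ_zmod p hp hp5



private lemma coreL (p : ℕ) [NeZero p] (hp : p.Prime) (hp5 : 5 ≤ p) :
    (2 : ZMod p) * (∑ k ∈ Icc 1 (p / 3), ((k : ZMod p))⁻¹)
      + 3 * ((fq p 3 : ℤ) : ZMod p) = 0 := by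
  have hFact : Fact p.Prime := ⟨hp⟩
  set m := p / 3 with hm
  set m2 := 2 * p / 3 with hm2
  have h3 : ¬ (3 ∣ p) := by
    intro h
    have := (Nat.prime_dvd_prime_iff_eq (by norm_num) hp).mp h
    omega
  have hmod : p % 3 = 1 ∨ p % 3 = 2 := by omega
  have hmfacts : 3 * m + 1 ≤ p ∧ p ≤ 3 * m + 2 ∧ p - 1 - m2 = m ∧ m < m2 ∧ m2 < p - 1 := by
    omega
  -- basic non-divisibility facts
  have hnd3 : ¬ p ∣ 3 := fun h => by have := Nat.le_of_dvd (by norm_num) h; omega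
  have hndk : ∀ k, k ∈ Icc 1 (p - 1) → ¬ p ∣ k := by
    intro k hk h
    simp only [mem_Icc] at hk
    have := Nat.le_of_dvd (by omega) h
    omega
  have hnd3k : ∀ k, k ∈ Icc 1 (p - 1) → ¬ p ∣ 3 * k := by
    intro k hk h
    exact (hp.dvd_mul.mp h).elim hnd3 (hndk k hk)
  have h30 : ((3 : ℕ) : ZMod p) ≠ 0 := by
    rw [Ne, ZMod.natCast_eq_zero_iff]; exact hnd3
  -- Step 1
  have hA : ∑ k ∈ Icc 1 (p - 1), (fq p (3 * k) : ZMod p)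
      = -(fq p 3 : ZMod p) + ∑ k ∈ Icc 1 (p - 1), (fq p k : ZMod p) := by
    have h1 : ∑ k ∈ Icc 1 (p - 1), (fq p (3 * k) : ZMod p)
        = ∑ k ∈ Icc 1 (p - 1), ((fq p 3 : ZMod p) + (fq p k : ZMod p)) :=
      Finset.sum_congr rfl (fun k hk => fq_mul p 3 k hp hnd3 (hndk k hk))
    rw [h1, Finset.sum_add_distrib, Finset.sum_const, Nat.card_Icc]
    have hcard : p - 1 + 1 - 1 = p - 1 := by omega
    rw [hcard]
    have hneg : ((p - 1 : ℕ) : ZMod p) = -1 := by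
      have h := congrArg (fun k : ℕ => (k : ZMod p)) (show (p - 1) + 1 = p by omega)
      push_cast at h
      rw [ZMod.natCast_self] at h
      linear_combination h
    rw [nsmul_eq_mul, hneg]
    ring
  -- Step 2
  have hB : ∑ k ∈ Icc 1 (p - 1), (fq p (3 * k) : ZMod p)
      = ∑ k ∈ Icc 1 (p - 1), (fq p k : ZMod p)
        - ∑ k ∈ Icc 1 (p - 1), ((3 * k / p : ℕ) : ZMod p) * (((3 * k : ℕ) : ZMod p))⁻¹ := by
    have h1 : ∑ k ∈ Icc 1 (p - 1), (fq p (3 * k) : ZMod p)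
        = ∑ k ∈ Icc 1 (p - 1), ((fq p (3 * k % p) : ZMod p)
            - (3 * k / p : ℕ) * (((3 * k : ℕ) : ZMod p))⁻¹) :=
      Finset.sum_congr rfl (fun k hk => fq_local p (3 * k) hp hp5 (hnd3k k hk))
    rw [h1, Finset.sum_sub_distrib]
    congr 1
    -- permutation argument
    have h2 : ∀ k ∈ Icc 1 (p - 1), (fq p (3 * k % p) : ZMod p)
        = (fun x : ZMod p => (fq p x.val : ZMod p)) ((3 : ZMod p) * (k : ZMod p)) := by
      intro k hk
      have h3k : ((3 * k : ℕ) : ZMod p) = (3 : ZMod p) * (k : ZMod p) := by push_cast; ring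
      show (fq p (3 * k % p) : ZMod p) = (fq p (((3 : ZMod p) * (k : ZMod p)).val) : ZMod p)
      rw [← h3k, ZMod.val_natCast]
    rw [Finset.sum_congr rfl h2]
    rw [reindex3 p hp (fun x => (fun y : ZMod p => (fq p y.val : ZMod p)) ((3 : ZMod p) * x))]
    rw [mul_perm3 p hp (fun y : ZMod p => (fq p y.val : ZMod p)) (3 : ZMod p) (by simpa using h30)]
    rw [← reindex3 p hp (fun y : ZMod p => (fq p y.val : ZMod p))]
    apply Finset.sum_congr rfl
    intro k hk
    simp only [mem_Icc] at hk
    show (fq p ((k : ZMod p)).val : ZMod p) = _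
    rw [ZMod.val_natCast, Nat.mod_eq_of_lt (by omega)]
  -- Step 3: E = t3
  have hE : ∑ k ∈ Icc 1 (p - 1), ((3 * k / p : ℕ) : ZMod p) * (((3 * k : ℕ) : ZMod p))⁻¹
      = (fq p 3 : ZMod p) := by
    have h := hA.symm.trans hB
    linear_combination h
  -- Step 4: E' = 3 * t3
  have hE' : ∑ k ∈ Icc 1 (p - 1), ((3 * k / p : ℕ) : ZMod p) * ((k : ZMod p))⁻¹
      = 3 * (fq p 3 : ZMod p) := by
    have h1 : ∀ k ∈ Icc 1 (p - 1), ((3 * k / p : ℕ) : ZMod p) * ((k : ZMod p))⁻¹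
        = 3 * (((3 * k / p : ℕ) : ZMod p) * (((3 * k : ℕ) : ZMod p))⁻¹) := by
      intro k hk
      simp only [mem_Icc] at hk
      have hk0 : ((k : ℕ) : ZMod p) ≠ 0 := by
        rw [Ne, ZMod.natCast_eq_zero_iff]
        exact hndk k (by simp only [mem_Icc]; omega)
      have h3k : ((3 * k : ℕ) : ZMod p) = (3 : ZMod p) * (k : ZMod p) := by push_cast; ring
      rw [h3k, mul_inv]
      have h3' : (3 : ZMod p) ≠ 0 := by simpa using h30
      field_simp
    rw [Finset.sum_congr rfl h1, ← Finset.mul_sum, hE]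
  -- Step 5/6: split and evaluate
  have hIcc : Icc 1 (p - 1) = Ioc 0 (p - 1) := Finset.Icc_add_one_left_eq_Ioc 0 (p - 1)
  have hIccm : Icc 1 m = Ioc 0 m := Finset.Icc_add_one_left_eq_Ioc 0 m
  have hsplit : ∀ f : ℕ → ZMod p, ∑ k ∈ Ioc 0 (p - 1), f k
      = ∑ k ∈ Ioc 0 m, f k + ∑ k ∈ Ioc m m2, f k + ∑ k ∈ Ioc m2 (p - 1), f k := by
    intro f
    rw [← Finset.sum_Ioc_consecutive f (show 0 ≤ m by omega) (show m ≤ p - 1 by omega),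
      ← Finset.sum_Ioc_consecutive f (show m ≤ m2 by omega) (show m2 ≤ p - 1 by omega)]
    ring
  set S1 := ∑ k ∈ Ioc 0 m, ((k : ZMod p))⁻¹ with hS1
  set S2 := ∑ k ∈ Ioc m m2, ((k : ZMod p))⁻¹ with hS2
  set S3 := ∑ k ∈ Ioc m2 (p - 1), ((k : ZMod p))⁻¹ with hS3
  -- evaluate E'
  have hE'' : S2 + 2 * S3 = 3 * (fq p 3 : ZMod p) := by
    rw [← hE', hIcc, hsplit]
    have e1 : ∑ k ∈ Ioc 0 m, ((3 * k / p : ℕ) : ZMod p) * ((k : ZMod p))⁻¹ = 0 := by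
      apply Finset.sum_eq_zero
      intro k hk
      simp only [mem_Ioc] at hk
      have : 3 * k / p = 0 := Nat.div_eq_of_lt (by omega)
      rw [this]
      simp
    have e2 : ∑ k ∈ Ioc m m2, ((3 * k / p : ℕ) : ZMod p) * ((k : ZMod p))⁻¹ = S2 := by
      apply Finset.sum_congr rfl
      intro k hk
      simp only [mem_Ioc] at hk
      have : 3 * k / p = 1 := Nat.div_eq_of_lt_le (by omega) (by omega)
      rw [this]
      simp
    have e3 : ∑ k ∈ Ioc m2 (p - 1), ((3 * k / p : ℕ) : ZMod p) * ((k : ZMod p))⁻¹ = 2 * S3 := by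
      rw [hS3, Finset.mul_sum]
      apply Finset.sum_congr rfl
      intro k hk
      simp only [mem_Ioc] at hk
      have : 3 * k / p = 2 := Nat.div_eq_of_lt_le (by omega) (by omega)
      rw [this]
      push_cast
      ring
    rw [e1, e2, e3]
    ring
  -- Step 7: S3 = -S1
  have hS31 : S3 = -S1 := by
    rw [hS3, hS1, ← Finset.sum_neg_distrib]
    refine Finset.sum_nbij' (fun k => p - k) (fun k => p - k) ?_ ?_ ?_ ?_ ?_
    · intro k hk
      simp only [mem_Ioc] at hk ⊢
      omega
    · intro k hk
      simp only [mem_Ioc] at hk ⊢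
      omega
    · intro k hk
      simp only [mem_Ioc] at hk
      show p - (p - k) = k
      omega
    · intro k hk
      simp only [mem_Ioc] at hk
      show p - (p - k) = k
      omega
    · intro k hk
      simp only [mem_Ioc] at hk
      show ((k : ZMod p))⁻¹ = -(((p - k : ℕ) : ZMod p))⁻¹
      have h1 : ((p - k : ℕ) : ZMod p) = -(k : ZMod p) := by
        have h := congrArg (fun j : ℕ => (j : ZMod p)) (show (p - k) + k = p by omega)
        push_cast at h
        rw [ZMod.natCast_self] at h
        linear_combination h
      rw [h1, inv_neg]
      ring
  -- Step 8: S1 + S2 + S3 = 0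
  have hStot : S1 + S2 + S3 = 0 := by
    have := sum_inv_all3 p hp hp5
    rw [hIcc, hsplit (fun k => ((k : ZMod p))⁻¹)] at this
    exact this
  -- conclude
  rw [hIccm]
  have hS20 : S2 = 0 := by
    rw [hS31] at hStot
    linear_combination hStot
  rw [hS20, hS31] at hE''
  linear_combination -hE''


theorem harmonic_third_cong (p : ℕ) (hp : p.Prime) (hp5 : 5 ≤ p) :
    (p : ℤ) ∣ ((∑ i ∈ Finset.Icc 1 (p / 3), (1 : ℚ) / i)
      - (-(3 / 2) * ((3 ^ (p - 1) - 1 : ℚ) / p))).num := by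
  haveI : NeZero p := ⟨hp.ne_zero⟩
  have hFact : Fact p.Prime := ⟨hp⟩
  set m := p / 3 with hm
  have hmp : m < p := by omega
  have hnd3 : ¬ p ∣ 3 := fun h => by have := Nat.le_of_dvd (by norm_num) h; omega
  set R : ℚ := (∑ i ∈ Finset.Icc 1 m, (1 : ℚ) / i)
      - (-(3 / 2) * ((3 ^ (p - 1) - 1 : ℚ) / p)) with hR
  set w : ℕ → ℕ := fun i => m.factorial / i with hw
  set N : ℤ := 2 * (∑ i ∈ Icc 1 m, ((w i : ℕ) : ℤ)) + 3 * fq p 3 * m.factorial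
    with hN
  set D : ℤ := 2 * (m.factorial : ℤ) with hD
  have hfac0 : (m.factorial : ℚ) ≠ 0 := Nat.cast_ne_zero.mpr (Nat.factorial_ne_zero m)
  have hD0 : (D : ℚ) ≠ 0 := by
    rw [hD]; push_cast; positivity
  have hp0 : ((p : ℚ)) ≠ 0 := Nat.cast_ne_zero.mpr hp.ne_zero
  have hsum : (∑ i ∈ Icc 1 m, (1 : ℚ) / i)
      = (∑ i ∈ Icc 1 m, ((w i : ℕ) : ℚ)) / m.factorial := by
    rw [Finset.sum_div]
    apply Finset.sum_congr rfl
    intro i hi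
    simp only [mem_Icc] at hi
    have hi0 : ((i : ℚ)) ≠ 0 := Nat.cast_ne_zero.mpr (by omega)
    rw [hw]
    simp only []
    rw [Nat.cast_div (Nat.dvd_factorial (by omega) hi.2) hi0]
    field_simp
  have hq : ((3 : ℚ) ^ (p - 1) - 1) / p = (fq p 3 : ℚ) := by
    have h := fq_spec p 3 hp hnd3
    have hq2 : ((3 : ℚ) ^ (p - 1) - 1) = (p : ℚ) * (fq p 3 : ℚ) := by
      exact_mod_cast congrArg (Int.cast : ℤ → ℚ) h
    rw [hq2]
    field_simp
  have hRE : R = (N : ℚ) / D := by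
    rw [hR, hsum, hq, hN, hD]
    push_cast
    field_simp
    ring
  have hndD : ¬ (p : ℤ) ∣ D := by
    rw [hD]
    have h2 : (2 * (m.factorial : ℤ)) = ((2 * m.factorial : ℕ) : ℤ) := by push_cast; ring
    rw [h2, Int.natCast_dvd_natCast]
    intro h
    rcases hp.dvd_mul.mp h with h2' | hf
    · have := Nat.le_of_dvd (by norm_num) h2'; omega
    · have := (Nat.Prime.dvd_factorial hp).mp hf; omega
  have hpN : (p : ℤ) ∣ N := by
    rw [← ZMod.intCast_zmod_eq_zero_iff_dvd]
    have hterm : ∑ i ∈ Icc 1 m, ((w i : ℕ) : ZMod p)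
        = (m.factorial : ZMod p) * ∑ i ∈ Icc 1 m, ((i : ZMod p))⁻¹ := by
      rw [Finset.mul_sum]
      apply Finset.sum_congr rfl
      intro i hi
      simp only [mem_Icc] at hi
      have hi0 : ((i : ℕ) : ZMod p) ≠ 0 := by
        rw [Ne, ZMod.natCast_eq_zero_iff]
        intro hd
        have := Nat.le_of_dvd (by omega) hd
        omega
      rw [hw]
      simp only []
      rw [Nat.cast_div (Nat.dvd_factorial (by omega) hi.2) hi0, div_eq_mul_inv]
    have hcast : ((N : ℤ) : ZMod p)
        = (m.factorial : ZMod p) * ((2 : ZMod p) * (∑ k ∈ Icc 1 m, ((k : ZMod p))⁻¹)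
            + 3 * ((fq p 3 : ℤ) : ZMod p)) := by
      rw [hN]
      push_cast
      rw [hterm]
      ring
    rw [hcast, coreL p hp hp5, mul_zero]
  have hden0 : ((R.den : ℚ)) ≠ 0 := Nat.cast_ne_zero.mpr R.den_nz
  have hRnum : (R.num : ℚ) / R.den = (N : ℚ) / D := by
    rw [Rat.num_div_den]; exact hRE
  have hcross : (R.num : ℚ) * D = N * R.den := (div_eq_div_iff hden0 hD0).mp hRnum
  have hcrossZ : R.num * D = N * (R.den : ℤ) := by exact_mod_cast hcross
  have hpdvd : (p : ℤ) ∣ R.num * D := by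
    rw [hcrossZ]
    exact hpN.mul_right _
  have hpprime : Prime (p : ℤ) := Nat.prime_iff_prime_int.mp hp
  rcases hpprime.dvd_mul.mp hpdvd with h | h
  · exact h
  · exact absurd h hndD
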